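/- Let u₁, u₂, u₃ be the roots of λ³ - λ² - t = 0 for real t ≠ 0 near 0, with u₁, u₂ → 0 and u₃ → 1 as t → 0. Then Σ_{j=1,2} c1(B(u_j))·c2(B(u_j)) / det B(u_j) converges to 15 as t → 0, where B(u) is the matrix with rows (1-u, -u², 0), (1, -2u, 0), (0, 0, -u), c1 is the trace, and c2 is the sum of the principal 2×2 minors. -/

import Mathlib

open Matrix Filter Topology

/-- Second elementary symmetric function of the eigenvalues of a 3×3 matrix:
the sum of the principal 2×2 minors. -/
def c2 (A : Matrix (Fin 3) (Fin 3) ℂ) : ℂ :=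
  (A 0 0 * A 1 1 - A 0 1 * A 1 0) + (A 0 0 * A 2 2 - A 0 2 * A 2 0) +
    (A 1 1 * A 2 2 - A 1 2 * A 2 1)

/-- The linear part of the vector field at the singular point `(u², u, 0)`. -/
def B (u : ℂ) : Matrix (Fin 3) (Fin 3) ℂ := !![1 - u, -u ^ 2, 0; 1, -2 * u, 0; 0, 0, -u]

lemma traceB (u : ℂ) : (B u).trace = 1 - 4*u := by
  simp [B, Matrix.trace_fin_three]; ring

lemma c2B (u : ℂ) : c2 (B u) = -3*u + 6*u^2 := by
  simp [c2, B]; ring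

lemma detB (u : ℂ) : (B u).det = u^2*(2 - 3*u) := by
  simp [B, Matrix.det_fin_three]; ring

lemma perRoot (u : ℂ) (hu : u ≠ 0) (h2 : 2 - 3*u ≠ 0) :
    (B u).trace * c2 (B u) / (B u).det = 8 - 3/(2*u) - 5/(2*(2-3*u)) := by
  rw [traceB, c2B, detB]
  field_simp
  have h2' : (2 - u*3) ≠ 0 := by contrapose! h2; linear_combination h2
  field_simp
  ring

theorem stmt_6 (u₁ u₂ u₃ : ℝ → ℂ)
    (hroots : ∀ t : ℝ, t ≠ 0 → ∀ z : ℂ,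
      z ^ 3 - z ^ 2 - (t : ℂ) = (z - u₁ t) * (z - u₂ t) * (z - u₃ t))
    (hlim₁ : Tendsto u₁ (𝓝[≠] (0 : ℝ)) (𝓝 0))
    (hlim₂ : Tendsto u₂ (𝓝[≠] (0 : ℝ)) (𝓝 0))
    (hlim₃ : Tendsto u₃ (𝓝[≠] (0 : ℝ)) (𝓝 1)) :
    Tendsto (fun t : ℝ =>
        (B (u₁ t)).trace * c2 (B (u₁ t)) / (B (u₁ t)).det
          + (B (u₂ t)).trace * c2 (B (u₂ t)) / (B (u₂ t)).det)
      (𝓝[≠] (0 : ℝ)) (𝓝 15) := by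
  have hb1 : ∀ᶠ t in 𝓝[≠] (0:ℝ), ‖u₁ t - 0‖ < 1/4 := by
    have := hlim₁ (Metric.ball_mem_nhds (0:ℂ) (by norm_num : (0:ℝ) < 1/4))
    filter_upwards [this] with t ht
    simpa [Metric.mem_ball, dist_eq_norm] using ht
  have hb2 : ∀ᶠ t in 𝓝[≠] (0:ℝ), ‖u₂ t - 0‖ < 1/4 := by
    have := hlim₂ (Metric.ball_mem_nhds (0:ℂ) (by norm_num : (0:ℝ) < 1/4))
    filter_upwards [this] with t ht
    simpa [Metric.mem_ball, dist_eq_norm] using ht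
  have hb3 : ∀ᶠ t in 𝓝[≠] (0:ℝ), ‖u₃ t - 1‖ < 1/4 := by
    have := hlim₃ (Metric.ball_mem_nhds (1:ℂ) (by norm_num : (0:ℝ) < 1/4))
    filter_upwards [this] with t ht
    simpa [Metric.mem_ball, dist_eq_norm] using ht
  have hne : ∀ᶠ t in 𝓝[≠] (0:ℝ), t ≠ 0 := by
    have : ({0}ᶜ : Set ℝ) ∈ 𝓝[≠] (0:ℝ) := self_mem_nhdsWithin
    filter_upwards [this] with t ht
    simpa using ht
  have hmain : ∀ᶠ t in 𝓝[≠] (0:ℝ),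
      (B (u₁ t)).trace * c2 (B (u₁ t)) / (B (u₁ t)).det
        + (B (u₂ t)).trace * c2 (B (u₂ t)) / (B (u₂ t)).det
      = 16 + 3/(2 * u₃ t) - 5/(2*(3 * u₃ t - 2)) := by
    filter_upwards [hb1, hb2, hb3, hne] with t h1 h2 h3 ht
    set a := u₁ t; set b := u₂ t; set c := u₃ t
    have spec := hroots t ht
    have h0 := spec 0
    have hp1 := spec 1
    have hm1 := spec (-1)
    have hc := spec c
    have he3 : a*b*c = (t:ℂ) := by linear_combination h0
    have he1 : a + b + c = 1 := by linear_combination hp1/2 + hm1/2 - h0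
    have he2 : a*b + a*c + b*c = 0 := by linear_combination hm1/2 - hp1/2
    have hr3 : c^3 - c^2 = (t:ℂ) := by linear_combination hc
    have htc : (t:ℂ) ≠ 0 := by exact_mod_cast ht
    have ha0 : a ≠ 0 := by
      intro h; apply htc; rw [← he3, h]; ring
    have hb0 : b ≠ 0 := by
      intro h; apply htc; rw [← he3, h]; ring
    have hc0 : c ≠ 0 := by
      intro h
      rw [h] at h3
      norm_num at h3
    have h2a : 2 - 3*a ≠ 0 := by
      intro h
      have : a = 2/3 := by linear_combination -h/3
      rw [this] at h1
      rw [show ((2:ℂ)/3 - 0) = 2/3 by ring] at h1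
      rw [show ‖((2:ℂ)/3)‖ = 2/3 by norm_num] at h1
      norm_num at h1
    have h2b : 2 - 3*b ≠ 0 := by
      intro h
      have : b = 2/3 := by linear_combination -h/3
      rw [this] at h2
      rw [show ((2:ℂ)/3 - 0) = 2/3 by ring] at h2
      rw [show ‖((2:ℂ)/3)‖ = 2/3 by norm_num] at h2
      norm_num at h2
    have h2c : 3*c - 2 ≠ 0 := by
      intro h
      have : c - 1 = -(1/3) := by linear_combination h/3
      rw [this] at h3
      rw [show ‖(-(1/3) : ℂ)‖ = 1/3 by norm_num] at h3
      norm_num at h3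
    have hkey : (2-3*a)*(2-3*b) = (1+3*c)*(3*c-2) := by
      apply mul_right_cancel₀ hc0
      linear_combination 9*he3 - 9*hr3 - 6*c*he1
    rw [perRoot a ha0 h2a, perRoot b hb0 h2b]
    have hA : 3/(2*a) + 3/(2*b) = -(3/(2*c)) := by
      field_simp
      linear_combination he2
    have hB : 5/(2*(2-3*a)) + 5/(2*(2-3*b)) = 5/(2*(3*c-2)) := by
      field_simp
      linear_combination (-3*(3*c-2))*he1 - hkey
    have : (8 - 3/(2*a) - 5/(2*(2-3*a))) + (8 - 3/(2*b) - 5/(2*(2-3*b)))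
        = 16 - (3/(2*a) + 3/(2*b)) - (5/(2*(2-3*a)) + 5/(2*(2-3*b))) := by ring
    rw [this, hA, hB]
    ring
  have hlimg : Tendsto (fun t : ℝ => 16 + 3/(2 * u₃ t) - 5/(2*(3 * u₃ t - 2)))
      (𝓝[≠] (0:ℝ)) (𝓝 15) := by
    have t1 : Tendsto (fun t : ℝ => 2 * u₃ t) (𝓝[≠] (0:ℝ)) (𝓝 2) := by
      simpa using hlim₃.const_mul (2:ℂ)
    have t2 : Tendsto (fun t : ℝ => 2*(3 * u₃ t - 2)) (𝓝[≠] (0:ℝ)) (𝓝 2) := by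
      have : Tendsto (fun t : ℝ => 3 * u₃ t - 2) (𝓝[≠] (0:ℝ)) (𝓝 1) := by
        have := (hlim₃.const_mul (3:ℂ)).sub (tendsto_const_nhds (x := (2:ℂ)))
        norm_num at this
        exact this
      simpa using this.const_mul (2:ℂ)
    have d1 : Tendsto (fun t : ℝ => 3/(2 * u₃ t)) (𝓝[≠] (0:ℝ)) (𝓝 (3/2)) :=
      tendsto_const_nhds.div t1 (by norm_num)
    have d2 : Tendsto (fun t : ℝ => 5/(2*(3 * u₃ t - 2))) (𝓝[≠] (0:ℝ)) (𝓝 (5/2)) :=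
      tendsto_const_nhds.div t2 (by norm_num)
    have : Tendsto (fun t : ℝ => 16 + 3/(2 * u₃ t) - 5/(2*(3 * u₃ t - 2)))
        (𝓝[≠] (0:ℝ)) (𝓝 (16 + 3/2 - 5/2)) :=
      (tendsto_const_nhds.add d1).sub d2
    convert this using 2
    norm_num
  exact Tendsto.congr' (hmain.mono fun t h => h.symm) hlimg
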